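/- arXiv:1909.07056 — 4 statements merged into one kernel-verified Lean document; each statement's English description precedes it below -/
import Mathlib

section
/- For every s ∈ ℝ^d, the function w is differentiable at s and ∇w(s) = −(Dη̂(s))ᵀ (DΦ(η̂(s)))ᵀ h(s), where Dη̂(s) is the Jacobian matrix of η̂ at s and DΦ(η̂(s)) is the Jacobian matrix of Φ at η̂(s). -/
open MeasureTheory
open scoped RealInnerProductSpace

set_option maxHeartbeats 2000000 in
theorem statement1
    (c d l : ℕ)
    (Θ : Set (EuclideanSpace ℝ (Fin c))) (hΘ : IsOpen Θ)
    (Ψ : EuclideanSpace ℝ (Fin c) → ℝ)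
    (Φ : EuclideanSpace ℝ (Fin c) → EuclideanSpace ℝ (Fin d))
    (hΨ : ContDiffOn ℝ 1 Ψ Θ) (hΦ : ContDiffOn ℝ 1 Φ Θ)
    (S : EuclideanSpace ℝ (Fin l) → EuclideanSpace ℝ (Fin d))
    (hS : Measurable S)
    (L : EuclideanSpace ℝ (Fin c) → EuclideanSpace ℝ (Fin l) → ℝ)
    (hL : ∀ η ξ, L η ξ = Real.exp (-Ψ η + ⟪S ξ, Φ η⟫))
    (hLint : ∀ η ∈ Θ, Integrable (L η))
    (hLpos : ∀ η ∈ Θ, 0 < ∫ ξ, L η ξ)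
    (hSint : ∀ η ∈ Θ, Integrable (fun ξ => ‖S ξ‖ * L η ξ))
    (ℓ : EuclideanSpace ℝ (Fin c) → ℝ)
    (hℓ : ∀ η, ℓ η = Real.log (∫ ξ, L η ξ))
    (π : EuclideanSpace ℝ (Fin c) → EuclideanSpace ℝ (Fin l) → ℝ)
    (hπ : ∀ η ξ, π η ξ = L η ξ / ∫ ξ', L η ξ')
    -- differentiation under the integral sign in η is valid for ∫ L(η; ξ) dξ
    (hDUI : ∀ η ∈ Θ, HasGradientAt (fun η' => ∫ ξ, L η' ξ)
      (∫ ξ, L η ξ • (-gradient Ψ η + ContinuousLinearMap.adjoint (fderiv ℝ Φ η) (S ξ))) η)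
    (ηhat : EuclideanSpace ℝ (Fin d) → EuclideanSpace ℝ (Fin c))
    (hηhatΘ : ∀ s, ηhat s ∈ Θ)
    (hηhatC1 : ContDiff ℝ 1 ηhat)
    (hmax : ∀ s : EuclideanSpace ℝ (Fin d), ∀ η ∈ Θ,
      -Ψ η + ⟪s, Φ η⟫ ≤ -Ψ (ηhat s) + ⟪s, Φ (ηhat s)⟫)
    (w : EuclideanSpace ℝ (Fin d) → ℝ)
    (hw : ∀ s, w s = -ℓ (ηhat s))
    (h : EuclideanSpace ℝ (Fin d) → EuclideanSpace ℝ (Fin d))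
    (hh : ∀ s, h s = ∫ ξ, π (ηhat s) ξ • (S ξ - s))
 :
    ∀ s, HasGradientAt w
      (-(ContinuousLinearMap.adjoint (fderiv ℝ ηhat s)
          (ContinuousLinearMap.adjoint (fderiv ℝ Φ (ηhat s)) (h s)))) s := by
  intro s
  set η := ηhat s with hηdef
  have hηΘ : η ∈ Θ := hηhatΘ s
  have hnhds : Θ ∈ nhds η := hΘ.mem_nhds hηΘ
  have hΨd : DifferentiableAt ℝ Ψ η :=
    (hΨ.differentiableOn one_ne_zero).differentiableAt hnhds
  have hΦd : DifferentiableAt ℝ Φ η :=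
    (hΦ.differentiableOn one_ne_zero).differentiableAt hnhds
  set A := fderiv ℝ Φ η with hA
  set F := ∫ ξ, L η ξ with hFdef
  have hFpos : 0 < F := hLpos η hηΘ
  -- first order condition at the maximizer
  have hΨfd : HasFDerivAt Ψ ((InnerProductSpace.toDual ℝ _) (gradient Ψ η)) η :=
    hΨd.hasGradientAt.hasFDerivAt
  have hinnerfd : HasFDerivAt (fun η' => ⟪s, Φ η'⟫)
      ((innerSL ℝ s).comp A) η :=
    (innerSL ℝ s).hasFDerivAt.comp η hΦd.hasFDerivAt
  have hffd : HasFDerivAt (fun η' => -Ψ η' + ⟪s, Φ η'⟫)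
      (-(InnerProductSpace.toDual ℝ _) (gradient Ψ η) + (innerSL ℝ s).comp A) η :=
    hΨfd.neg.add hinnerfd
  have hlm : IsLocalMax (fun η' => -Ψ η' + ⟪s, Φ η'⟫) η :=
    Filter.eventually_of_mem hnhds fun η' hη' => hmax s η' hη'
  have hD0 : -(InnerProductSpace.toDual ℝ _) (gradient Ψ η) + (innerSL ℝ s).comp A = 0 :=
    hlm.hasFDerivAt_eq_zero hffd
  have hFOC : ContinuousLinearMap.adjoint A s = gradient Ψ η := by
    apply ext_inner_right ℝ
    intro v
    have h0 : (-(InnerProductSpace.toDual ℝ _) (gradient Ψ η) + (innerSL ℝ s).comp A) v = 0 := by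
      rw [hD0]; rfl
    simp only [ContinuousLinearMap.add_apply, ContinuousLinearMap.neg_apply,
      ContinuousLinearMap.comp_apply, InnerProductSpace.toDual_apply_apply, innerSL_apply_apply] at h0
    rw [ContinuousLinearMap.adjoint_inner_left]
    linarith
  -- integrability
  have hLI := hLint η hηΘ
  have hginteg : Integrable (fun ξ => L η ξ • (S ξ - s)) := by
    have hb : Integrable (fun ξ => ‖S ξ‖ * L η ξ + ‖s‖ * L η ξ) :=
      (hSint η hηΘ).add (hLI.const_mul _)
    refine hb.mono' (hLI.aestronglyMeasurable.smul
      ((hS.sub measurable_const).aestronglyMeasurable)) ?_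
    filter_upwards with ξ
    have hLnn : 0 ≤ L η ξ := by rw [hL]; positivity
    rw [norm_smul, Real.norm_eq_abs, abs_of_nonneg hLnn]
    have h1 := norm_sub_le (S ξ) s
    nlinarith [norm_nonneg (S ξ - s)]
  -- relate h s to the unnormalized integral
  have hhs : ∫ ξ, L η ξ • (S ξ - s) = F • h s := by
    have hpt : (fun ξ => π η ξ • (S ξ - s)) = fun ξ => F⁻¹ • (L η ξ • (S ξ - s)) := by
      funext ξ
      rw [hπ, smul_smul, div_eq_inv_mul]
    rw [hh, hpt, integral_smul, smul_smul, mul_inv_cancel₀ hFpos.ne', one_smul]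
  -- compute the gradient integrand
  have hGeq : (∫ ξ, L η ξ • (-gradient Ψ η + ContinuousLinearMap.adjoint A (S ξ)))
      = ContinuousLinearMap.adjoint A (F • h s) := by
    rw [← hhs, ← ContinuousLinearMap.integral_comp_comm _ hginteg]
    refine integral_congr_ae (Filter.Eventually.of_forall fun ξ => ?_)
    show L η ξ • (-gradient Ψ η + ContinuousLinearMap.adjoint A (S ξ))
        = ContinuousLinearMap.adjoint A (L η ξ • (S ξ - s))
    rw [← hFOC, _root_.map_smul, map_sub, sub_eq_neg_add]
  -- gradient of ℓ at η
  have hFgrad : HasGradientAt (fun η' => ∫ ξ, L η' ξ)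
      (ContinuousLinearMap.adjoint A (F • h s)) η := by
    have := hDUI η hηΘ
    rwa [hGeq] at this
  have hloggrad : HasGradientAt ℓ (ContinuousLinearMap.adjoint A (h s)) η := by
    have hlog : HasDerivAt Real.log F⁻¹ F := Real.hasDerivAt_log hFpos.ne'
    have hcomp := hlog.comp_hasFDerivAt η hFgrad.hasFDerivAt
    have hℓeq : ℓ = Real.log ∘ (fun η' => ∫ ξ, L η' ξ) := funext fun η' => hℓ η'
    rw [hasGradientAt_iff_hasFDerivAt, hℓeq]
    refine hcomp.congr_fderiv ?_
    rw [_root_.map_smul (ContinuousLinearMap.adjoint A),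
      _root_.map_smul (InnerProductSpace.toDual ℝ (EuclideanSpace ℝ (Fin c))),
      smul_smul, inv_mul_cancel₀ hFpos.ne', one_smul]
  -- chain rule through ηhat
  have hηd : HasFDerivAt ηhat (fderiv ℝ ηhat s) s :=
    ((hηhatC1.differentiable one_ne_zero) s).hasFDerivAt
  have hcomp2 : HasFDerivAt (fun s' => ℓ (ηhat s'))
      (((InnerProductSpace.toDual ℝ _) (ContinuousLinearMap.adjoint A (h s))).comp
        (fderiv ℝ ηhat s)) s :=
    (hloggrad.hasFDerivAt).comp s hηd
  have hgrad2 : HasGradientAt (fun s' => ℓ (ηhat s'))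
      (ContinuousLinearMap.adjoint (fderiv ℝ ηhat s)
        (ContinuousLinearMap.adjoint A (h s))) s := by
    rw [hasGradientAt_iff_hasFDerivAt]
    refine hcomp2.congr_fderiv ?_
    ext v
    simp only [InnerProductSpace.toDual_apply_apply, ContinuousLinearMap.comp_apply]
    rw [ContinuousLinearMap.adjoint_inner_left, ContinuousLinearMap.adjoint_inner_left,
      ContinuousLinearMap.adjoint_inner_left]
  have hweq : w = fun s' => -ℓ (ηhat s') := funext fun s' => hw s'
  rw [hweq, hasGradientAt_iff_hasFDerivAt, map_neg]
  exact hgrad2.hasFDerivAt.neg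
end

section
/- Assume in addition that Ψ and Φ are twice continuously differentiable, and for s ∈ ℝ^d let H(s) denote the Hessian matrix at η̂(s) of the map η ↦ Ψ(η) − ⟨s, Φ(η)⟩, which is positive semidefinite since η̂(s) is an interior maximizer of its negative. Then for every s ∈ ℝ^d one has ⟨∇w(s), h(s)⟩ = −⟨H(s) Dη̂(s) h(s), Dη̂(s) h(s)⟩ ≤ 0; consequently, setting 𝒮 = { s ∈ ℝ^d : ⟨∇w(s), h(s)⟩ = 0 }, for every s ∉ 𝒮 one has ⟨∇w(s), h(s)⟩ < 0, i.e., w is a Lyapunov function for the mean field h. -/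
open MeasureTheory
open scoped RealInnerProductSpace

section Aux
open Filter Topology InnerProductSpace

lemma aux_second_deriv_nonneg {g g' : ℝ → ℝ} {c : ℝ}
    (hd : ∀ᶠ t in 𝓝 (0:ℝ), HasDerivAt g (g' t) t)
    (hmin : ∀ᶠ t in 𝓝 (0:ℝ), g 0 ≤ g t)
    (h0 : g' 0 = 0)
    (hd2 : HasDerivAt g' c 0) : 0 ≤ c := by
  by_contra hc
  push_neg at hc
  have hslope : Tendsto (slope g' 0) (𝓝[≠] (0:ℝ)) (𝓝 c) :=
    hasDerivAt_iff_tendsto_slope.mp hd2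
  have hneg : ∀ᶠ t in 𝓝[≠] (0:ℝ), slope g' 0 t < 0 :=
    hslope.eventually_lt_const hc
  have hall : ∀ᶠ t in 𝓝 (0:ℝ), (t ≠ 0 → slope g' 0 t < 0) ∧ HasDerivAt g (g' t) t ∧ g 0 ≤ g t := by
    refine ((eventually_nhdsWithin_iff.mp hneg).and (hd.and hmin)).mono ?_
    tauto
  obtain ⟨δ, hδ, hball⟩ := Metric.eventually_nhds_iff.mp hall
  set t₀ := δ/2 with ht₀
  have ht₀pos : 0 < t₀ := by positivity
  have ht₀mem : ∀ t ∈ Set.Icc (0:ℝ) t₀, dist t 0 < δ := by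
    intro t ht
    rw [Real.dist_eq, sub_zero, abs_of_nonneg ht.1]
    have := ht.2; simp only [ht₀] at this ⊢; linarith
  have hgneg : ∀ t ∈ Set.Ioo (0:ℝ) t₀, deriv g t < 0 := by
    intro t ht
    have hmem := hball (show dist t 0 < δ from ht₀mem t ⟨le_of_lt ht.1, le_of_lt ht.2⟩)
    have hs := hmem.1 (ne_of_gt ht.1)
    rw [slope_def_field, h0, sub_zero, sub_zero, div_neg_iff] at hs
    have hg't : g' t < 0 := by
      rcases hs with ⟨_, h2⟩ | ⟨h1, _⟩
      · linarith [ht.1]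
      · exact h1
    rw [hmem.2.1.deriv]; exact hg't
  have hcont : ContinuousOn g (Set.Icc (0:ℝ) t₀) := by
    intro t ht
    exact ((hball (ht₀mem t ht)).2.1.continuousAt).continuousWithinAt
  have hanti : StrictAntiOn g (Set.Icc (0:ℝ) t₀) := by
    refine strictAntiOn_of_deriv_neg (convex_Icc _ _) hcont ?_
    rwa [interior_Icc]
  have hlt : g t₀ < g 0 := hanti ⟨le_refl 0, le_of_lt ht₀pos⟩ ⟨le_of_lt ht₀pos, le_refl _⟩ ht₀pos
  have hge : g 0 ≤ g t₀ := (hball (ht₀mem t₀ ⟨le_of_lt ht₀pos, le_refl _⟩)).2.2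
  linarith

noncomputable def starToCLM {E F : Type*} [NormedAddCommGroup E] [NormedAddCommGroup F]
    [NormedSpace ℝ E] [NormedSpace ℝ F] (e : E ≃ₗᵢ⋆[ℝ] F) : E →L[ℝ] F :=
  { toFun := e
    map_add' := fun x y => e.map_add x y
    map_smul' := fun r x => by simpa using e.map_smulₛₗ r x
    cont := e.continuous }

@[simp] lemma starToCLM_apply {E F : Type*} [NormedAddCommGroup E] [NormedAddCommGroup F]
    [NormedSpace ℝ E] [NormedSpace ℝ F] (e : E ≃ₗᵢ⋆[ℝ] F) (x : E) : starToCLM e x = e x := rfl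

lemma aux_fderiv_gradient {E : Type*} [NormedAddCommGroup E] [InnerProductSpace ℝ E]
    [CompleteSpace E] {Θ : Set E} (hΘ : IsOpen Θ) {F : E → ℝ} {η₀ : E} (hη₀ : η₀ ∈ Θ)
    (hF2 : ContDiffOn ℝ 2 F Θ) :
    HasFDerivAt (fun η => gradient F η)
      ((starToCLM (toDual ℝ E).symm).comp (fderiv ℝ (fderiv ℝ F) η₀)) η₀ := by
  have hF2at : ContDiffAt ℝ 2 F η₀ := hF2.contDiffAt (hΘ.mem_nhds hη₀)
  have hφ : ContDiffAt ℝ 1 (fderiv ℝ F) η₀ := hF2at.fderiv_right (by norm_num)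
  have hφd : HasFDerivAt (fderiv ℝ F) (fderiv ℝ (fderiv ℝ F) η₀) η₀ :=
    (hφ.differentiableAt one_ne_zero).hasFDerivAt
  exact (starToCLM (toDual ℝ E).symm).hasFDerivAt.comp η₀ hφd

lemma aux_psd {E : Type*} [NormedAddCommGroup E] [InnerProductSpace ℝ E]
    [CompleteSpace E] {Θ : Set E} (hΘ : IsOpen Θ) {F : E → ℝ} {η₀ : E} (hη₀ : η₀ ∈ Θ)
    (hF2 : ContDiffOn ℝ 2 F Θ) (hmin : ∀ η ∈ Θ, F η₀ ≤ F η) (u : E) :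
    0 ≤ ⟪fderiv ℝ (fun η => gradient F η) η₀ u, u⟫ := by
  have hDg := aux_fderiv_gradient hΘ hη₀ hF2
  rw [hDg.fderiv]
  set Dφ := fderiv ℝ (fderiv ℝ F) η₀ with hDφ
  have hval : ⟪(starToCLM (toDual ℝ E).symm).comp Dφ u, u⟫ = (Dφ u) u := by
    simp [ContinuousLinearMap.comp_apply, starToCLM_apply, toDual_symm_apply]
  rw [hval]
  set line : ℝ → E := fun t => η₀ + t • u with hline
  have hlinec : Continuous line := by continuity
  have hline0 : line 0 = η₀ := by simp [hline]
  have hlined : ∀ t : ℝ, HasDerivAt line u t := by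
    intro t
    simpa [hline] using ((hasDerivAt_id t).smul_const u).const_add η₀
  have hmemΘ : ∀ᶠ t in 𝓝 (0:ℝ), line t ∈ Θ := by
    have : Θ ∈ 𝓝 (line 0) := hΘ.mem_nhds (hline0 ▸ hη₀)
    exact hlinec.continuousAt.preimage_mem_nhds this
  set g : ℝ → ℝ := fun t => F (line t) with hg
  set g' : ℝ → ℝ := fun t => fderiv ℝ F (line t) u with hg'
  have hdF : ∀ η ∈ Θ, HasFDerivAt F (fderiv ℝ F η) η := by
    intro η hη
    exact ((hF2.contDiffAt (hΘ.mem_nhds hη)).differentiableAt (by norm_num)).hasFDerivAt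
  have hd : ∀ᶠ t in 𝓝 (0:ℝ), HasDerivAt g (g' t) t := by
    filter_upwards [hmemΘ] with t ht
    exact (hdF (line t) ht).comp_hasDerivAt t (hlined t)
  have hmin' : ∀ᶠ t in 𝓝 (0:ℝ), g 0 ≤ g t := by
    filter_upwards [hmemΘ] with t ht
    simp only [hg, hline0]
    exact hmin (line t) ht
  have h0 : g' 0 = 0 := by
    have hloc : IsLocalMin F η₀ := by
      have : ∀ᶠ η in 𝓝 η₀, F η₀ ≤ F η := by
        filter_upwards [hΘ.mem_nhds hη₀] with η hη using hmin η hη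
      exact this
    have := hloc.hasFDerivAt_eq_zero (hdF η₀ hη₀)
    simp [hg', hline0, this]
  have hφd : HasFDerivAt (fderiv ℝ F) Dφ η₀ :=
    (((hF2.contDiffAt (hΘ.mem_nhds hη₀)).fderiv_right
      (by norm_num : (1 : WithTop ℕ∞) + 1 ≤ 2)).differentiableAt one_ne_zero).hasFDerivAt
  have hd2 : HasDerivAt g' ((Dφ u) u) 0 := by
    have h1 : HasDerivAt (fun t => fderiv ℝ F (line t)) (Dφ u) 0 := by
      have hφd' : HasFDerivAt (fderiv ℝ F) Dφ (line 0) := by rw [hline0]; exact hφd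
      exact hφd'.comp_hasDerivAt 0 (hlined 0)
    have := (ContinuousLinearMap.apply ℝ ℝ u).hasFDerivAt.comp_hasDerivAt 0 h1
    exact this
  exact aux_second_deriv_nonneg hd hmin' h0 hd2

end Aux

set_option maxHeartbeats 1000000 in
set_option synthInstance.maxHeartbeats 200000 in
theorem statement2
    (c d l : ℕ)
    (Θ : Set (EuclideanSpace ℝ (Fin c))) (hΘ : IsOpen Θ)
    (Ψ : EuclideanSpace ℝ (Fin c) → ℝ)
    (Φ : EuclideanSpace ℝ (Fin c) → EuclideanSpace ℝ (Fin d))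
    (hΨ : ContDiffOn ℝ 1 Ψ Θ) (hΦ : ContDiffOn ℝ 1 Φ Θ)
    (S : EuclideanSpace ℝ (Fin l) → EuclideanSpace ℝ (Fin d))
    (hS : Measurable S)
    (L : EuclideanSpace ℝ (Fin c) → EuclideanSpace ℝ (Fin l) → ℝ)
    (hL : ∀ η ξ, L η ξ = Real.exp (-Ψ η + ⟪S ξ, Φ η⟫))
    (hLint : ∀ η ∈ Θ, Integrable (L η))
    (hLpos : ∀ η ∈ Θ, 0 < ∫ ξ, L η ξ)
    (hSint : ∀ η ∈ Θ, Integrable (fun ξ => ‖S ξ‖ * L η ξ))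
    (ℓ : EuclideanSpace ℝ (Fin c) → ℝ)
    (hℓ : ∀ η, ℓ η = Real.log (∫ ξ, L η ξ))
    (π : EuclideanSpace ℝ (Fin c) → EuclideanSpace ℝ (Fin l) → ℝ)
    (hπ : ∀ η ξ, π η ξ = L η ξ / ∫ ξ', L η ξ')
    -- differentiation under the integral sign in η is valid for ∫ L(η; ξ) dξ
    (hDUI : ∀ η ∈ Θ, HasGradientAt (fun η' => ∫ ξ, L η' ξ)
      (∫ ξ, L η ξ • (-gradient Ψ η + ContinuousLinearMap.adjoint (fderiv ℝ Φ η) (S ξ))) η)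
    (ηhat : EuclideanSpace ℝ (Fin d) → EuclideanSpace ℝ (Fin c))
    (hηhatΘ : ∀ s, ηhat s ∈ Θ)
    (hηhatC1 : ContDiff ℝ 1 ηhat)
    (hmax : ∀ s : EuclideanSpace ℝ (Fin d), ∀ η ∈ Θ,
      -Ψ η + ⟪s, Φ η⟫ ≤ -Ψ (ηhat s) + ⟪s, Φ (ηhat s)⟫)
    (w : EuclideanSpace ℝ (Fin d) → ℝ)
    (hw : ∀ s, w s = -ℓ (ηhat s))
    (h : EuclideanSpace ℝ (Fin d) → EuclideanSpace ℝ (Fin d))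
    (hh : ∀ s, h s = ∫ ξ, π (ηhat s) ξ • (S ξ - s))
    -- Ψ and Φ are twice continuously differentiable
    (hΨ2 : ContDiffOn ℝ 2 Ψ Θ) (hΦ2 : ContDiffOn ℝ 2 Φ Θ)
    -- H(s) is the Hessian at η̂(s) of η ↦ Ψ(η) − ⟨s, Φ(η)⟩
    (H : EuclideanSpace ℝ (Fin d) → EuclideanSpace ℝ (Fin c) →L[ℝ] EuclideanSpace ℝ (Fin c))
    (hH : ∀ s, H s =
      fderiv ℝ (fun η => gradient (fun η' => Ψ η' - ⟪s, Φ η'⟫) η) (ηhat s))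
 :
    (∀ s, ⟪gradient w s, h s⟫ =
        -⟪(H s) (fderiv ℝ ηhat s (h s)), fderiv ℝ ηhat s (h s)⟫
      ∧ ⟪gradient w s, h s⟫ ≤ 0)
    ∧ (∀ s ∉ {s' : EuclideanSpace ℝ (Fin d) | ⟪gradient w s', h s'⟫ = 0},
        ⟪gradient w s, h s⟫ < 0) := by
  classical
  -- basic differentiability on Θ
  have hΨd : ∀ η ∈ Θ, DifferentiableAt ℝ Ψ η := fun η hη =>
    (hΨ.contDiffAt (hΘ.mem_nhds hη)).differentiableAt one_ne_zero
  have hΦd : ∀ η ∈ Θ, HasFDerivAt Φ (fderiv ℝ Φ η) η := fun η hη =>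
    ((hΦ.contDiffAt (hΘ.mem_nhds hη)).differentiableAt one_ne_zero).hasFDerivAt
  set A : EuclideanSpace ℝ (Fin c) → EuclideanSpace ℝ (Fin c) := fun η => gradient Ψ η with hA_def
  set B : EuclideanSpace ℝ (Fin c) → (EuclideanSpace ℝ (Fin d) →L[ℝ] EuclideanSpace ℝ (Fin c)) := fun η => ContinuousLinearMap.adjoint (fderiv ℝ Φ η) with hB_def
  -- gradient of η ↦ ⟪s', Φ η⟫
  have hgradIP : ∀ (s' : EuclideanSpace ℝ (Fin d)), ∀ η ∈ Θ, HasGradientAt (fun η' => ⟪s', Φ η'⟫) (B η s') η := by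
    intro s' η hη
    have hf : HasFDerivAt (fun η' => ⟪s', Φ η'⟫)
        ((innerSL ℝ s').comp (fderiv ℝ Φ η)) η :=
      (innerSL ℝ s').hasFDerivAt.comp η (hΦd η hη)
    rw [hasGradientAt_iff_hasFDerivAt]
    have heq : (innerSL ℝ s').comp (fderiv ℝ Φ η)
        = (InnerProductSpace.toDual ℝ (EuclideanSpace ℝ (Fin c))) (B η s') := by
      ext v
      show ⟪s', fderiv ℝ Φ η v⟫ = ⟪ContinuousLinearMap.adjoint (fderiv ℝ Φ η) s', v⟫
      exact (ContinuousLinearMap.adjoint_inner_left (fderiv ℝ Φ η) v s').symm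
    rw [← heq]
    exact hf
  -- gradient of F_{s'}
  have hgradF : ∀ (s' : EuclideanSpace ℝ (Fin d)), ∀ η ∈ Θ,
      HasGradientAt (fun η' => Ψ η' - ⟪s', Φ η'⟫) (A η - B η s') η := by
    intro s' η hη
    have h1 : HasGradientAt Ψ (A η) η := (hΨd η hη).hasGradientAt
    have h2 := hgradIP s' η hη
    rw [hasGradientAt_iff_hasFDerivAt] at h1 h2 ⊢
    rw [map_sub]
    exact h1.sub h2
  -- stationarity
  have hstat : ∀ (s' : EuclideanSpace ℝ (Fin d)), A (ηhat s') = B (ηhat s') s' := by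
    intro s'
    have hη := hηhatΘ s'
    have hloc : IsLocalMin (fun η' => Ψ η' - ⟪s', Φ η'⟫) (ηhat s') := by
      have : ∀ᶠ η in nhds (ηhat s'), (fun η' => Ψ η' - ⟪s', Φ η'⟫) (ηhat s') ≤
          (fun η' => Ψ η' - ⟪s', Φ η'⟫) η := by
        filter_upwards [hΘ.mem_nhds hη] with η hηΘ
        have := hmax s' η hηΘ
        show Ψ (ηhat s') - ⟪s', Φ (ηhat s')⟫ ≤ Ψ η - ⟪s', Φ η⟫
        linarith
      exact this
    have hz := hloc.hasFDerivAt_eq_zero (hgradF s' (ηhat s') hη).hasFDerivAt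
    have : A (ηhat s') - B (ηhat s') s' = 0 := by
      have := congrArg (InnerProductSpace.toDual ℝ (EuclideanSpace ℝ (Fin c))).symm hz
      simpa using this
    exact sub_eq_zero.mp this
  -- main claim for each s
  have main : ∀ s : EuclideanSpace ℝ (Fin d), ⟪gradient w s, h s⟫ =
        -⟪(H s) (fderiv ℝ ηhat s (h s)), fderiv ℝ ηhat s (h s)⟫
      ∧ ⟪gradient w s, h s⟫ ≤ 0 := by
    intro s
    have hη₀ : ηhat s ∈ Θ := hηhatΘ s
    set η₀ := ηhat s with hη₀def
    set Dη := fderiv ℝ ηhat s with hDη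
    have hηd : HasFDerivAt ηhat Dη s := ((hηhatC1.differentiable one_ne_zero) s).hasFDerivAt
    -- F_s is C² on Θ
    have hF2 : ∀ s' : EuclideanSpace ℝ (Fin d), ContDiffOn ℝ 2 (fun η' => Ψ η' - ⟪s', Φ η'⟫) Θ := by
      intro s'
      exact hΨ2.sub ((contDiffOn_const (c := s')).inner ℝ hΦ2)
    -- F_s is minimized at η₀ over Θ
    have hFmin : ∀ s' : EuclideanSpace ℝ (Fin d), ∀ η ∈ Θ,
        (fun η' => Ψ η' - ⟪s', Φ η'⟫) (ηhat s') ≤ (fun η' => Ψ η' - ⟪s', Φ η'⟫) η := by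
      intro s' η hη
      have := hmax s' η hη
      simp only
      linarith
    -- derivative of A at η₀
    have hAd : HasFDerivAt A
        ((starToCLM (InnerProductSpace.toDual ℝ (EuclideanSpace ℝ (Fin c))).symm).comp (fderiv ℝ (fderiv ℝ Ψ) η₀)) η₀ :=
      aux_fderiv_gradient hΘ hη₀ hΨ2
    set DA := (starToCLM (InnerProductSpace.toDual ℝ (EuclideanSpace ℝ (Fin c))).symm).comp (fderiv ℝ (fderiv ℝ Ψ) η₀)
      with hDA
    -- derivative of B at η₀
    have hBd : HasFDerivAt B
        ((starToCLM (ContinuousLinearMap.adjoint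
            : (EuclideanSpace ℝ (Fin c) →L[ℝ] EuclideanSpace ℝ (Fin d)) ≃ₗᵢ⋆[ℝ] (EuclideanSpace ℝ (Fin d) →L[ℝ] EuclideanSpace ℝ (Fin c)))).comp (fderiv ℝ (fderiv ℝ Φ) η₀)) η₀ := by
      have hφ : ContDiffAt ℝ 1 (fderiv ℝ Φ) η₀ :=
        (hΦ2.contDiffAt (hΘ.mem_nhds hη₀)).fderiv_right (by norm_num)
      have hφd : HasFDerivAt (fderiv ℝ Φ) (fderiv ℝ (fderiv ℝ Φ) η₀) η₀ :=
        (hφ.differentiableAt one_ne_zero).hasFDerivAt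
      exact (starToCLM (ContinuousLinearMap.adjoint
        : (EuclideanSpace ℝ (Fin c) →L[ℝ] EuclideanSpace ℝ (Fin d)) ≃ₗᵢ⋆[ℝ]
          (EuclideanSpace ℝ (Fin d) →L[ℝ] EuclideanSpace ℝ (Fin c)))).hasFDerivAt.comp η₀ hφd
    set DB := (starToCLM (ContinuousLinearMap.adjoint
        : (EuclideanSpace ℝ (Fin c) →L[ℝ] EuclideanSpace ℝ (Fin d)) ≃ₗᵢ⋆[ℝ] (EuclideanSpace ℝ (Fin d) →L[ℝ] EuclideanSpace ℝ (Fin c)))).comp (fderiv ℝ (fderiv ℝ Φ) η₀) with hDB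
    -- H s in terms of DA and DB
    have hHs : ∀ v : EuclideanSpace ℝ (Fin c), H s v = DA v - (DB v) s := by
      intro v
      have hcong : (fun η => gradient (fun η' => Ψ η' - ⟪s, Φ η'⟫) η)
          =ᶠ[nhds η₀] (fun η => A η - B η s) := by
        filter_upwards [hΘ.mem_nhds hη₀] with η hη
        exact (hgradF s η hη).gradient
      have hABd : HasFDerivAt (fun η => A η - B η s) (DA - DB.flip s) η₀ := by
        have h2 : HasFDerivAt (fun η => B η s) (DB.flip s) η₀ := by
          have := hBd.clm_apply (hasFDerivAt_const s η₀)
          simpa using this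
        exact hAd.sub h2
      have : H s = DA - DB.flip s := by
        rw [hH s, hcong.fderiv_eq, hABd.fderiv]
      rw [this]
      simp [ContinuousLinearMap.flip_apply]
    -- differentiate stationarity identity
    have hKzero : (fun s' : EuclideanSpace ℝ (Fin d) => A (ηhat s') - B (ηhat s') s') = fun _ => (0 : EuclideanSpace ℝ (Fin c)) := by
      funext s'
      rw [hstat s']
      simp
    have hKd : HasFDerivAt (fun s' : EuclideanSpace ℝ (Fin d) => A (ηhat s') - B (ηhat s') s')
        (DA.comp Dη - ((B η₀).comp (ContinuousLinearMap.id ℝ (EuclideanSpace ℝ (Fin d))) + (DB.comp Dη).flip s)) s := by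
      have h1 : HasFDerivAt (fun s' => A (ηhat s')) (DA.comp Dη) s := hAd.comp s hηd
      have h2 : HasFDerivAt (fun s' => B (ηhat s')) (DB.comp Dη) s := hBd.comp s hηd
      have h3 : HasFDerivAt (fun s' : EuclideanSpace ℝ (Fin d) => B (ηhat s') s')
          ((B η₀).comp (ContinuousLinearMap.id ℝ (EuclideanSpace ℝ (Fin d))) + (DB.comp Dη).flip s) s :=
        h2.clm_apply (hasFDerivAt_id s)
      exact h1.sub h3
    have hKzero' : HasFDerivAt (fun s' : EuclideanSpace ℝ (Fin d) => A (ηhat s') - B (ηhat s') s') (0 : EuclideanSpace ℝ (Fin d) →L[ℝ] EuclideanSpace ℝ (Fin c)) s := by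
      rw [hKzero]
      exact hasFDerivAt_const 0 s
    have hKeq := hKd.unique hKzero'
    have hkey : ∀ v : EuclideanSpace ℝ (Fin d), H s (Dη v) = B η₀ v := by
      intro v
      have := congrArg (fun T : EuclideanSpace ℝ (Fin d) →L[ℝ] EuclideanSpace ℝ (Fin c) => T v) hKeq
      simp only [ContinuousLinearMap.sub_apply, ContinuousLinearMap.add_apply,
        ContinuousLinearMap.comp_apply, ContinuousLinearMap.flip_apply,
        ContinuousLinearMap.id_apply, ContinuousLinearMap.zero_apply] at this
      have h1 := hHs (Dη v)
      rw [h1]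
      linear_combination (norm := module) this
    -- integral computations
    have hI₀pos : (0:ℝ) < ∫ ξ, L η₀ ξ := hLpos η₀ hη₀
    set I₀ := ∫ ξ, L η₀ ξ with hI₀def
    have hLnn : ∀ ξ, 0 ≤ L η₀ ξ := fun ξ => by
      rw [hL]; exact le_of_lt (Real.exp_pos _)
    have intL : Integrable (L η₀) := hLint η₀ hη₀
    have intLS : Integrable (fun ξ => L η₀ ξ • S ξ) := by
      refine Integrable.mono' (hSint η₀ hη₀)
        (intL.aestronglyMeasurable.smul hS.aestronglyMeasurable) ?_
      refine Filter.Eventually.of_forall fun ξ => ?_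
      rw [norm_smul, Real.norm_eq_abs, abs_of_nonneg (hLnn ξ)]
      exact le_of_eq (mul_comm _ _)
    have intLs : Integrable (fun ξ => L η₀ ξ • s) := intL.smul_const s
    have intLSs : Integrable (fun ξ => L η₀ ξ • (S ξ - s)) := by
      have := intLS.sub intLs
      simp only [smul_sub]
      exact this
    have hhs : I₀ • h s = ∫ ξ, L η₀ ξ • (S ξ - s) := by
      rw [hh s]
      have hfe : (fun ξ => π (ηhat s) ξ • (S ξ - s))
          = fun ξ => I₀⁻¹ • (L η₀ ξ • (S ξ - s)) := by
        funext ξ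
        rw [hπ, smul_smul, div_eq_inv_mul]
      rw [hfe, integral_smul, smul_inv_smul₀ (ne_of_gt hI₀pos)]
    -- the gradient of the normalizing integral
    have hgI := hDUI η₀ hη₀
    have hgIeq : (∫ ξ, L η₀ ξ •
          (-gradient Ψ η₀ + ContinuousLinearMap.adjoint (fderiv ℝ Φ η₀) (S ξ)))
        = I₀ • (B η₀ (h s)) := by
      have hstat' : gradient Ψ η₀ = B η₀ s := hstat s
      have h1 : (fun ξ => L η₀ ξ •
            (-gradient Ψ η₀ + ContinuousLinearMap.adjoint (fderiv ℝ Φ η₀) (S ξ)))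
          = fun ξ => B η₀ (L η₀ ξ • (S ξ - s)) := by
        funext ξ
        rw [_root_.map_smul, _root_.map_sub, hstat']
        congr 1
        have : ContinuousLinearMap.adjoint (fderiv ℝ Φ η₀) (S ξ) = B η₀ (S ξ) := by
          simp [hB_def]
        rw [this]
        abel
      rw [h1, ContinuousLinearMap.integral_comp_comm (B η₀) intLSs, ← hhs, _root_.map_smul]
    rw [hgIeq] at hgI
    -- gradient of w at s
    have hwfun : w = fun s' => -Real.log (∫ ξ, L (ηhat s') ξ) := by
      funext s'
      rw [hw, hℓ]
    have hIfd : HasFDerivAt (fun η' => ∫ ξ, L η' ξ)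
        ((InnerProductSpace.toDual ℝ (EuclideanSpace ℝ (Fin c))) (I₀ • B η₀ (h s))) η₀ :=
      hgI.hasFDerivAt
    have hlog : HasDerivAt Real.log I₀⁻¹ ((fun η' => ∫ ξ, L η' ξ) η₀) := by
      have : HasDerivAt Real.log I₀⁻¹ I₀ := Real.hasDerivAt_log (ne_of_gt hI₀pos)
      simpa [← hI₀def] using this
    have hcomp1 : HasFDerivAt (fun η' => Real.log (∫ ξ, L η' ξ))
        ((InnerProductSpace.toDual ℝ (EuclideanSpace ℝ (Fin c))) (B η₀ (h s))) η₀ := by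
      have hc := hlog.comp_hasFDerivAt η₀ hIfd
      have hsc : I₀⁻¹ • ((InnerProductSpace.toDual ℝ (EuclideanSpace ℝ (Fin c))) (I₀ • B η₀ (h s)))
          = (InnerProductSpace.toDual ℝ (EuclideanSpace ℝ (Fin c))) (B η₀ (h s)) := by
        rw [map_smulₛₗ]
        rw [smul_smul]
        simp [inv_mul_cancel₀ (ne_of_gt hI₀pos)]
      rw [hsc] at hc
      exact hc
    have hcomp2 : HasFDerivAt (fun s' => Real.log (∫ ξ, L (ηhat s') ξ))
        (((InnerProductSpace.toDual ℝ (EuclideanSpace ℝ (Fin c))) (B η₀ (h s))).comp Dη) s :=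
      hcomp1.comp s hηd
    have hwd : HasFDerivAt w
        (-(((InnerProductSpace.toDual ℝ (EuclideanSpace ℝ (Fin c))) (B η₀ (h s))).comp Dη)) s := by
      rw [hwfun]
      exact hcomp2.neg
    have hgw : HasGradientAt w (-(ContinuousLinearMap.adjoint Dη (B η₀ (h s)))) s := by
      rw [hasGradientAt_iff_hasFDerivAt]
      have heq2 : -(((InnerProductSpace.toDual ℝ (EuclideanSpace ℝ (Fin c))) (B η₀ (h s))).comp Dη)
          = (InnerProductSpace.toDual ℝ (EuclideanSpace ℝ (Fin d)))
              (-(ContinuousLinearMap.adjoint Dη (B η₀ (h s)))) := by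
        ext v
        show -(⟪B η₀ (h s), Dη v⟫) = ⟪-(ContinuousLinearMap.adjoint Dη (B η₀ (h s))), v⟫
        rw [inner_neg_left, ContinuousLinearMap.adjoint_inner_left Dη v (B η₀ (h s))]
      rw [← heq2]
      exact hwd
    -- put everything together
    have hgrad : gradient w s = -(ContinuousLinearMap.adjoint Dη (B η₀ (h s))) := hgw.gradient
    have hval : ⟪gradient w s, h s⟫ = -⟪B η₀ (h s), Dη (h s)⟫ := by
      rw [hgrad, inner_neg_left, ContinuousLinearMap.adjoint_inner_left Dη (h s) (B η₀ (h s))]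
    have hpsd : 0 ≤ ⟪H s (Dη (h s)), Dη (h s)⟫ := by
      have := aux_psd hΘ hη₀ (hF2 s) (hFmin s) (Dη (h s))
      rwa [← hH s] at this
    constructor
    · rw [hval, hkey (h s)]
    · rw [hval, ← hkey (h s)]
      linarith
  refine ⟨main, fun s hs => ?_⟩
  exact lt_of_le_of_ne (main s).2 hs
end

section
/- If s ∈ ℝ^d is a zero of the mean field, i.e., h(s) = 0 (equivalently, s = ∫ S(ξ) π_{η̂(s)}(ξ) dξ is a fixed point of the map s ↦ E_{π_{η̂(s)}}[S]), then η̂(s) is a critical point of the marginal log-likelihood: ∇ℓ(η̂(s)) = 0. -/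
open MeasureTheory
open scoped RealInnerProductSpace

theorem statement3
    (c d l : ℕ)
    (Θ : Set (EuclideanSpace ℝ (Fin c))) (hΘ : IsOpen Θ)
    (Ψ : EuclideanSpace ℝ (Fin c) → ℝ)
    (Φ : EuclideanSpace ℝ (Fin c) → EuclideanSpace ℝ (Fin d))
    (hΨ : ContDiffOn ℝ 1 Ψ Θ) (hΦ : ContDiffOn ℝ 1 Φ Θ)
    (S : EuclideanSpace ℝ (Fin l) → EuclideanSpace ℝ (Fin d))
    (hS : Measurable S)
    (L : EuclideanSpace ℝ (Fin c) → EuclideanSpace ℝ (Fin l) → ℝ)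
    (hL : ∀ η ξ, L η ξ = Real.exp (-Ψ η + ⟪S ξ, Φ η⟫))
    (hLint : ∀ η ∈ Θ, Integrable (L η))
    (hLpos : ∀ η ∈ Θ, 0 < ∫ ξ, L η ξ)
    (hSint : ∀ η ∈ Θ, Integrable (fun ξ => ‖S ξ‖ * L η ξ))
    (ℓ : EuclideanSpace ℝ (Fin c) → ℝ)
    (hℓ : ∀ η, ℓ η = Real.log (∫ ξ, L η ξ))
    (π : EuclideanSpace ℝ (Fin c) → EuclideanSpace ℝ (Fin l) → ℝ)
    (hπ : ∀ η ξ, π η ξ = L η ξ / ∫ ξ', L η ξ')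
    -- differentiation under the integral sign in η is valid for ∫ L(η; ξ) dξ
    (hDUI : ∀ η ∈ Θ, HasGradientAt (fun η' => ∫ ξ, L η' ξ)
      (∫ ξ, L η ξ • (-gradient Ψ η + ContinuousLinearMap.adjoint (fderiv ℝ Φ η) (S ξ))) η)
    (ηhat : EuclideanSpace ℝ (Fin d) → EuclideanSpace ℝ (Fin c))
    (hηhatΘ : ∀ s, ηhat s ∈ Θ)
    (hηhatC1 : ContDiff ℝ 1 ηhat)
    (hmax : ∀ s : EuclideanSpace ℝ (Fin d), ∀ η ∈ Θ,
      -Ψ η + ⟪s, Φ η⟫ ≤ -Ψ (ηhat s) + ⟪s, Φ (ηhat s)⟫)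
    (w : EuclideanSpace ℝ (Fin d) → ℝ)
    (hw : ∀ s, w s = -ℓ (ηhat s))
    (h : EuclideanSpace ℝ (Fin d) → EuclideanSpace ℝ (Fin d))
    (hh : ∀ s, h s = ∫ ξ, π (ηhat s) ξ • (S ξ - s))
 :
    ∀ s, h s = 0 → gradient ℓ (ηhat s) = 0 := by
  intro s hs0
  set η₀ := ηhat s with hη₀
  have hη₀Θ : η₀ ∈ Θ := hηhatΘ s
  have hnhds : Θ ∈ nhds η₀ := hΘ.mem_nhds hη₀Θ
  have hΨd : DifferentiableAt ℝ Ψ η₀ :=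
    ((hΨ.differentiableOn one_ne_zero) η₀ hη₀Θ).differentiableAt hnhds
  have hΦd : DifferentiableAt ℝ Φ η₀ :=
    ((hΦ.differentiableOn one_ne_zero) η₀ hη₀Θ).differentiableAt hnhds
  set A := fderiv ℝ Φ η₀ with hA
  set A' := ContinuousLinearMap.adjoint A with hA'
  have hcompFD : HasFDerivAt (fun η => ⟪s, Φ η⟫) ((innerSL ℝ s).comp A) η₀ :=
    ((innerSL ℝ s).hasFDerivAt).comp η₀ hΦd.hasFDerivAt
  have hginner : DifferentiableAt ℝ (fun η => ⟪s, Φ η⟫) η₀ := hcompFD.differentiableAt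
  have hmax' : IsLocalMax (fun η => -Ψ η + ⟪s, Φ η⟫) η₀ :=
    Filter.eventually_of_mem hnhds (fun η hη => hmax s η hη)
  have hd : fderiv ℝ (fun η => -Ψ η + ⟪s, Φ η⟫) η₀ = 0 :=
    hmax'.fderiv_eq_zero
  have hkey : ∀ v, ⟪-gradient Ψ η₀ + A' s, v⟫ = 0 := by
    intro v
    have h0 : fderiv ℝ (fun η => -Ψ η + ⟪s, Φ η⟫) η₀ v = 0 := by
      rw [hd]; rfl
    rw [fderiv_fun_add (f := fun η => -Ψ η) hΨd.neg hginner] at h0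
    have hΨfd : fderiv ℝ Ψ η₀ v = ⟪gradient Ψ η₀, v⟫ := by
      rw [← InnerProductSpace.toDual_apply_apply]
      rw [gradient, (InnerProductSpace.toDual ℝ _).apply_symm_apply]
    have hinnerfd : fderiv ℝ (fun η => ⟪s, Φ η⟫) η₀ v = ⟪s, A v⟫ := by
      rw [hcompFD.fderiv]
      simp
    rw [inner_add_left, inner_neg_left, ContinuousLinearMap.adjoint_inner_left]
    rw [ContinuousLinearMap.add_apply, fderiv_fun_neg, ContinuousLinearMap.neg_apply,
      hΨfd, hinnerfd] at h0
    exact h0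
  have hzero : (-gradient Ψ η₀ + A' s) = 0 := by
    have := hkey (-gradient Ψ η₀ + A' s)
    rwa [inner_self_eq_zero] at this
  have hgradΨ : gradient Ψ η₀ = A' s := neg_add_eq_zero.1 hzero
  set F₀ := ∫ ξ, L η₀ ξ with hF₀
  have hF₀pos : 0 < F₀ := hLpos η₀ hη₀Θ
  have hLmeas : Measurable (L η₀) := by
    have h1 : Measurable fun ξ => ⟪S ξ, Φ η₀⟫ := hS.inner measurable_const
    have h2 : Measurable fun ξ => Real.exp (-Ψ η₀ + ⟪S ξ, Φ η₀⟫) :=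
      (measurable_const.add h1).exp
    simpa [funext fun ξ => hL η₀ ξ] using h2
  have hLnonneg : ∀ ξ, 0 ≤ L η₀ ξ := fun ξ => by
    rw [hL]; exact (Real.exp_pos _).le
  have hint : Integrable (fun ξ => L η₀ ξ • (S ξ - s)) := by
    have hb : Integrable (fun ξ => ‖S ξ‖ * L η₀ ξ + ‖s‖ * L η₀ ξ) :=
      (hSint η₀ hη₀Θ).add ((hLint η₀ hη₀Θ).const_mul ‖s‖)
    refine hb.mono' ?_ ?_
    · exact (hLmeas.smul (hS.sub measurable_const)).aestronglyMeasurable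
    · filter_upwards with ξ
      rw [norm_smul]
      calc ‖L η₀ ξ‖ * ‖S ξ - s‖ ≤ L η₀ ξ * (‖S ξ‖ + ‖s‖) := by
            rw [Real.norm_of_nonneg (hLnonneg ξ)]
            exact mul_le_mul_of_nonneg_left (norm_sub_le _ _) (hLnonneg ξ)
        _ = ‖S ξ‖ * L η₀ ξ + ‖s‖ * L η₀ ξ := by ring
  set I := ∫ ξ, L η₀ ξ • (S ξ - s) with hI
  have hhs : h s = F₀⁻¹ • I := by
    rw [hh, hI, ← integral_smul]
    congr 1
    funext ξ
    rw [hπ, div_eq_inv_mul, mul_smul]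
  have hI0 : I = 0 := by
    have h1 := hs0
    rw [hhs] at h1
    rcases smul_eq_zero.1 h1 with h2 | h2
    · exact absurd h2 (inv_ne_zero hF₀pos.ne')
    · exact h2
  have hGrad : HasGradientAt (fun η' => ∫ ξ, L η' ξ) 0 η₀ := by
    have hD := hDUI η₀ hη₀Θ
    have heq : (∫ ξ, L η₀ ξ • (-gradient Ψ η₀ + A' (S ξ))) = 0 := by
      have hinteq : (fun ξ => L η₀ ξ • (-gradient Ψ η₀ + A' (S ξ)))
          = fun ξ => A' (L η₀ ξ • (S ξ - s)) := by
        funext ξ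
        rw [hgradΨ, A'.map_smul, map_sub, neg_add_eq_sub]
      rw [hinteq, A'.integral_comp_comm hint, ← hI, hI0, map_zero]
    rwa [heq] at hD
  have hFfd : HasFDerivAt (fun η' => ∫ ξ, L η' ξ) (0 : EuclideanSpace ℝ (Fin c) →L[ℝ] ℝ) η₀ := by
    have h1 := hGrad.hasFDerivAt
    rwa [map_zero] at h1
  have hlog : HasDerivAt Real.log F₀⁻¹ F₀ := Real.hasDerivAt_log hF₀pos.ne'
  have hℓfd : HasFDerivAt ℓ (0 : EuclideanSpace ℝ (Fin c) →L[ℝ] ℝ) η₀ := by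
    have hcomp := hlog.comp_hasFDerivAt η₀ hFfd
    have hℓeq : ℓ = fun η => Real.log (∫ ξ, L η ξ) := funext hℓ
    rw [hℓeq]
    simp at hcomp
    exact hcomp
  have hfin : HasGradientAt ℓ 0 η₀ := by
    rw [hasGradientAt_iff_hasFDerivAt, map_zero]
    exact hℓfd
  exact hfin.gradient
end

section
/- (Louis's missing information principle.) For every θ ∈ Θ, the observed information matrix of the marginal satisfies −∇² log m(θ) = −∫ ∇²_θ log f(θ, b) π_θ(b) db − [ ∫ ∇_θ log f(θ, b) ∇_θ log f(θ, b)ᵀ π_θ(b) db − ( ∫ ∇_θ log f(θ, b) π_θ(b) db ) ( ∫ ∇_θ log f(θ, b) π_θ(b) db )ᵀ ], i.e., minus the posterior expectation of the complete-data Hessian minus the posterior covariance matrix of the complete-data score. -/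
open MeasureTheory
open scoped RealInnerProductSpace

section helpers
open InnerProductSpace

variable {E : Type*} [NormedAddCommGroup E] [InnerProductSpace ℝ E] [CompleteSpace E]

lemma toDual_eq_innerSL (v : E) : (toDual ℝ E v : E →L[ℝ] ℝ) = innerSL ℝ v := by
  ext w; simp [toDual_apply_apply]

lemma grad_log (u : E → ℝ) (g : E) (x : E) (hu : HasGradientAt u g x) (hx : u x ≠ 0) :
    HasGradientAt (fun t => Real.log (u t)) ((u x)⁻¹ • g) x := by
  rw [hasGradientAt_iff_hasFDerivAt]
  have h := (Real.hasDerivAt_log hx).comp_hasFDerivAt x hu.hasFDerivAt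
  convert h using 1
  ext w
  simp [toDual_apply_apply, inner_smul_left]
  · rfl
  · ext w; simp [toDual_apply_apply, inner_smul_left]

omit [CompleteSpace E] in
lemma outer_smul (c : ℝ) (v : E) :
    (innerSL ℝ (c • v)).smulRight (c • v) = (c ^ 2) • (innerSL ℝ v).smulRight v := by
  ext w
  simp [real_inner_smul_left, smul_smul]
  module

lemma key (u : E → ℝ) (G : E → E) (H : E →L[ℝ] E) (s : Set E) (hs : IsOpen s) (x : E)
    (hx : x ∈ s) (hu : ∀ y ∈ s, HasGradientAt u (G y) y) (hpos : ∀ y ∈ s, 0 < u y)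
    (hH : HasFDerivAt G H x) :
    fderiv ℝ (fun t => gradient (fun v => Real.log (u v)) t) x
      = (u x)⁻¹ • H - ((u x) ^ 2)⁻¹ • (innerSL ℝ (G x)).smulRight (G x) := by
  have heq : (fun t => gradient (fun v => Real.log (u v)) t) =ᶠ[nhds x]
      (fun y => (u y)⁻¹ • G y) := by
    filter_upwards [hs.mem_nhds hx] with y hy
    exact (grad_log u (G y) y (hu y hy) (hpos y hy).ne').gradient
  rw [heq.fderiv_eq]
  have hux : HasFDerivAt u (innerSL ℝ (G x)) x := by
    have := (hu x hx).hasFDerivAt; rwa [toDual_eq_innerSL] at this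
  have hinv : HasFDerivAt (fun y => (u y)⁻¹) ((-(u x ^ 2)⁻¹) • innerSL ℝ (G x)) x :=
    (hasDerivAt_inv (hpos x hx).ne').comp_hasFDerivAt x hux
  have hsm : HasFDerivAt (fun y => (u y)⁻¹ • G y) _ x := hinv.smul hH
  rw [hsm.fderiv]
  ext w
  simp [sub_smul, neg_smul, smul_smul, sub_eq_add_neg]

lemma dual_symm_blm : IsBoundedLinearMap ℝ (fun L : E →L[ℝ] ℝ => (toDual ℝ E).symm L) := by
  refine ⟨⟨fun L1 L2 => map_add _ _ _, fun c L => ?_⟩, 1, one_pos, fun L => by simp⟩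
  rw [LinearIsometryEquiv.map_smulₛₗ]
  simp

end helpers

theorem statement5
    (p l : ℕ)
    (Θ : Set (EuclideanSpace ℝ (Fin p))) (hΘ : IsOpen Θ)
    (f : EuclideanSpace ℝ (Fin p) → EuclideanSpace ℝ (Fin l) → ℝ)
    (hf_pos : ∀ θ b, 0 < f θ b)
    (hf_meas : Measurable (Function.uncurry f))
    (hf_smooth : ∀ b, ContDiffOn ℝ 2 (fun θ => f θ b) Θ)
    -- the marginal m(θ) = ∫ f(θ, b) db satisfies 0 < m(θ) < ∞ for every θ ∈ Θ
    (m : EuclideanSpace ℝ (Fin p) → ℝ)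
    (hm : ∀ θ, m θ = ∫ b, f θ b)
    (hm_int : ∀ θ ∈ Θ, Integrable (f θ))
    (hm_pos : ∀ θ ∈ Θ, 0 < m θ)
    -- the posterior density
    (π : EuclideanSpace ℝ (Fin p) → EuclideanSpace ℝ (Fin l) → ℝ)
    (hπ : ∀ θ b, π θ b = f θ b / m θ)
    -- differentiation under the integral sign for the first θ-derivative
    (hDUI1 : ∀ θ ∈ Θ, HasGradientAt (fun θ' => ∫ b, f θ' b)
      (∫ b, gradient (fun t => f t b) θ) θ)
    -- differentiation under the integral sign for the second θ-derivative
    (hDUI2 : ∀ θ ∈ Θ, HasFDerivAt (fun θ' => ∫ b, gradient (fun t => f t b) θ')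
      (∫ b, fderiv ℝ (fun t => gradient (fun u => f u b) t) θ) θ)
    -- π_θ-integrability of the complete-data score, Hessian and outer product of the score
    (hscore_int : ∀ θ ∈ Θ, Integrable
      (fun b => π θ b • gradient (fun t => Real.log (f t b)) θ))
    (hhess_int : ∀ θ ∈ Θ, Integrable
      (fun b => π θ b • fderiv ℝ (fun t => gradient (fun u => Real.log (f u b)) t) θ))
    (houter_int : ∀ θ ∈ Θ, Integrable
      (fun b => π θ b • ((innerSL ℝ (gradient (fun t => Real.log (f t b)) θ)).smulRight
        (gradient (fun t => Real.log (f t b)) θ))))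
    -- the complete-data score and its posterior mean
    (score : EuclideanSpace ℝ (Fin p) → EuclideanSpace ℝ (Fin l) → EuclideanSpace ℝ (Fin p))
    (hscore : ∀ θ b, score θ b = gradient (fun t => Real.log (f t b)) θ)
    (sbar : EuclideanSpace ℝ (Fin p) → EuclideanSpace ℝ (Fin p))
    (hsbar : ∀ θ, sbar θ = ∫ b, π θ b • score θ b) :
    ∀ θ ∈ Θ,
      -(fderiv ℝ (fun t => gradient (fun u => Real.log (m u)) t) θ) =
        -(∫ b, π θ b • fderiv ℝ (fun t => gradient (fun u => Real.log (f u b)) t) θ)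
        - ((∫ b, π θ b • ((innerSL ℝ (score θ b)).smulRight (score θ b)))
            - (innerSL ℝ (sbar θ)).smulRight (sbar θ)) := by
  intro θ hθ
  have hmθ := hm_pos θ hθ
  have hmfun : m = fun θ' => ∫ b, f θ' b := funext hm
  set G : EuclideanSpace ℝ (Fin p) → EuclideanSpace ℝ (Fin p) :=
    fun θ' => ∫ b, gradient (fun t => f t b) θ' with hGdef
  -- m side
  have hGm : ∀ y ∈ Θ, HasGradientAt m (G y) y := by
    intro y hy
    have := hDUI1 y hy
    rwa [← hmfun] at this
  have hLHS := key m G _ Θ hΘ θ hθ hGm hm_pos (hDUI2 θ hθ)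
  -- per-b gradients of f
  have hub : ∀ b, ∀ y ∈ Θ, HasGradientAt (fun t => f t b)
      (gradient (fun t => f t b) y) y := by
    intro b y hy
    exact ((((hf_smooth b).differentiableOn (by norm_num)) y hy).differentiableAt
      (hΘ.mem_nhds hy)).hasGradientAt
  -- per-b Hessian existence
  have hHb : ∀ b, HasFDerivAt (fun t => gradient (fun u => f u b) t)
      (fderiv ℝ (fun t => gradient (fun u => f u b) t) θ) θ := by
    intro b
    have h1 : ContDiffAt ℝ 1 (fderiv ℝ (fun u => f u b)) θ :=
      (((hf_smooth b).contDiffAt (hΘ.mem_nhds hθ)).fderiv_right (by norm_num))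
    have h2 : DifferentiableAt ℝ (fun t => gradient (fun u => f u b) t) θ := by
      exact (dual_symm_blm.differentiableAt).comp θ (h1.differentiableAt (by norm_num))
    exact h2.hasFDerivAt
  -- per-b key
  have hb : ∀ b, fderiv ℝ (fun t => gradient (fun u => Real.log (f u b)) t) θ
      = (f θ b)⁻¹ • (fderiv ℝ (fun t => gradient (fun u => f u b) t) θ)
        - ((f θ b) ^ 2)⁻¹ • (innerSL ℝ (gradient (fun t => f t b) θ)).smulRight
            (gradient (fun t => f t b) θ) := by
    intro b
    exact key (fun t => f t b) (fun y => gradient (fun t => f t b) y) _ Θ hΘ θ hθ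
      (hub b) (fun y _ => hf_pos y b) (hHb b)
  -- score formula
  have hscore_eq : ∀ b, score θ b = (f θ b)⁻¹ • gradient (fun t => f t b) θ := by
    intro b
    rw [hscore]
    exact (grad_log (fun t => f t b) _ θ (hub b θ hθ) (hf_pos θ b).ne').gradient
  -- pointwise combination
  have hsum : (fun b => (m θ)⁻¹ • fderiv ℝ (fun t => gradient (fun u => f u b) t) θ)
      = (fun b => π θ b • fderiv ℝ (fun t => gradient (fun u => Real.log (f u b)) t) θ
          + π θ b • ((innerSL ℝ (score θ b)).smulRight (score θ b))) := by
    funext b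
    have hfb := (hf_pos θ b).ne'
    rw [hb b, hscore_eq b, outer_smul, hπ, smul_sub, smul_smul, smul_smul, smul_smul,
      inv_pow]
    have e1 : f θ b / m θ * (f θ b)⁻¹ = (m θ)⁻¹ := by
      field_simp
    rw [e1]
    abel
  -- integrability
  have Ib1 := hhess_int θ hθ
  have Ib2 : Integrable (fun b => π θ b • ((innerSL ℝ (score θ b)).smulRight (score θ b))) := by
    have := houter_int θ hθ
    simp only [← hscore θ] at this
    exact this
  -- integral identity
  have hint : (m θ)⁻¹ • (∫ b, fderiv ℝ (fun t => gradient (fun u => f u b) t) θ)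
      = (∫ b, π θ b • fderiv ℝ (fun t => gradient (fun u => Real.log (f u b)) t) θ)
        + ∫ b, π θ b • ((innerSL ℝ (score θ b)).smulRight (score θ b)) := by
    rw [← integral_smul, hsum]
    exact integral_add Ib1 Ib2
  -- sbar formula
  have hsb : sbar θ = (m θ)⁻¹ • G θ := by
    rw [hsbar]
    have h : (fun b => π θ b • score θ b)
        = fun b => (m θ)⁻¹ • gradient (fun t => f t b) θ := by
      funext b
      rw [hπ, hscore_eq b, smul_smul]
      congr 1
      field_simp
      exact div_self (hf_pos θ b).ne'
    rw [h, integral_smul]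
  have houtersb : ((m θ) ^ 2)⁻¹ • (innerSL ℝ (G θ)).smulRight (G θ)
      = (innerSL ℝ (sbar θ)).smulRight (sbar θ) := by
    rw [hsb, outer_smul, inv_pow]
  rw [hLHS, hint, houtersb]
  abel
end
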